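/- Let A₁ ∈ ℝ^{n×n} be symmetric positive definite, M₁ ∈ ℝ^{r×r} be symmetric positive definite, and M₂ ∈ ℝ^{r×r} be symmetric positive semidefinite. Then for every Z ∈ ℝ^{n×r} the linear matrix equation A₁ ξ M₁ + ξ M₂ = Z has a unique solution ξ ∈ ℝ^{n×r}. -/

import Mathlib

open Matrix
open scoped MatrixOrder

/-- trace of `Yᵀ A Y` as a sum of quadratic forms over columns. -/
lemma trace_transpose_mul_mul_eq {a b : ℕ} (Y : Matrix (Fin a) (Fin b) ℝ)
    (A : Matrix (Fin a) (Fin a) ℝ) :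
    (Yᵀ * A * Y).trace = ∑ j, (fun i => Y i j) ⬝ᵥ A.mulVec (fun i => Y i j) := by
  simp only [trace, diag, mul_apply, dotProduct, mulVec, transpose_apply,
    Finset.sum_mul, Finset.mul_sum]
  refine Finset.sum_congr rfl fun j _ => ?_
  rw [Finset.sum_comm]
  exact Finset.sum_congr rfl fun i _ => Finset.sum_congr rfl fun k _ => by ring

lemma trace_transpose_mul_mul_nonneg {a b : ℕ} (Y : Matrix (Fin a) (Fin b) ℝ)
    (A : Matrix (Fin a) (Fin a) ℝ) (hA : ∀ v : Fin a → ℝ, 0 ≤ v ⬝ᵥ A.mulVec v) :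
    0 ≤ (Yᵀ * A * Y).trace := by
  rw [trace_transpose_mul_mul_eq]
  exact Finset.sum_nonneg fun j _ => hA _

lemma trace_transpose_mul_mul_pos {a b : ℕ} (Y : Matrix (Fin a) (Fin b) ℝ)
    (A : Matrix (Fin a) (Fin a) ℝ)
    (hA : ∀ v : Fin a → ℝ, v ≠ 0 → 0 < v ⬝ᵥ A.mulVec v) (hY : Y ≠ 0) :
    0 < (Yᵀ * A * Y).trace := by
  rw [trace_transpose_mul_mul_eq]
  have hA' : ∀ v : Fin a → ℝ, 0 ≤ v ⬝ᵥ A.mulVec v := by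
    intro v
    by_cases hv : v = 0
    · simp [hv]
    · exact (hA v hv).le
  obtain ⟨i, j, hij⟩ : ∃ i j, Y i j ≠ 0 := by
    by_contra h
    push_neg at h
    exact hY (by ext i j; simpa using h i j)
  refine Finset.sum_pos' (fun j _ => hA' _) ⟨j, Finset.mem_univ j, hA _ ?_⟩
  intro h0
  exact hij (congrFun h0 i)

/-- For `A₁ ≻ 0`, `M₁ ≻ 0` and `M₂ ⪰ 0`, the linear matrix equation
`A₁ ξ M₁ + ξ M₂ = Z` has a unique solution `ξ ∈ ℝ^{n×r}` for every `Z`. -/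
theorem stmt_7 (n r : ℕ) (A₁ : Matrix (Fin n) (Fin n) ℝ)
    (hA₁symm : A₁ = A₁ᵀ) (hA₁pd : ∀ v : Fin n → ℝ, v ≠ 0 → 0 < v ⬝ᵥ A₁.mulVec v)
    (M₁ : Matrix (Fin r) (Fin r) ℝ)
    (hM₁symm : M₁ = M₁ᵀ) (hM₁pd : ∀ v : Fin r → ℝ, v ≠ 0 → 0 < v ⬝ᵥ M₁.mulVec v)
    (M₂ : Matrix (Fin r) (Fin r) ℝ)
    (hM₂symm : M₂ = M₂ᵀ) (hM₂psd : ∀ v : Fin r → ℝ, 0 ≤ v ⬝ᵥ M₂.mulVec v)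
    (Z : Matrix (Fin n) (Fin r) ℝ) :
    ∃! ξ : Matrix (Fin n) (Fin r) ℝ, A₁ * ξ * M₁ + ξ * M₂ = Z := by
  classical
  -- M₁ is positive definite in Mathlib's sense
  have hM₁pd' : M₁.PosDef := by
    refine PosDef.of_dotProduct_mulVec_pos ?_ fun x hx => ?_
    · show M₁ᴴ = M₁
      ext i j
      simp only [conjTranspose_apply, star_trivial]
      exact congrFun (congrFun hM₁symm j) i
    · simpa using hM₁pd x hx
  -- square root of M₁
  set S := CFC.sqrt M₁ with hSdef
  have hSsq : S * S = M₁ := CFC.sqrt_mul_sqrt_self M₁ hM₁pd'.posSemidef.nonneg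
  have hSsymm : Sᵀ = S := by
    have h := (CFC.sqrt_nonneg M₁).posSemidef.1
    ext i j
    have h2 := congrFun (congrFun h i) j
    simpa [conjTranspose_apply, hSdef] using h2
  have hSdet : IsUnit S.det := by
    have hdet : S.det * S.det = M₁.det := by rw [← det_mul, hSsq]
    have : M₁.det ≠ 0 := ne_of_gt hM₁pd'.det_pos
    have hS0 : S.det ≠ 0 := fun h => this (by rw [← hdet, h, mul_zero])
    exact isUnit_iff_ne_zero.mpr hS0
  -- the linear map
  let L : Matrix (Fin n) (Fin r) ℝ →ₗ[ℝ] Matrix (Fin n) (Fin r) ℝ :=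
    { toFun := fun ξ => A₁ * ξ * M₁ + ξ * M₂
      map_add' := fun x y => by
        simp only [Matrix.mul_add, Matrix.add_mul]
        abel
      map_smul' := fun c x => by
        simp only [Matrix.mul_smul, Matrix.smul_mul, RingHom.id_apply, smul_add] }
  -- injectivity
  have hinj : Function.Injective L := by
    rw [← LinearMap.ker_eq_bot, LinearMap.ker_eq_bot']
    intro ξ hξ
    by_contra hne
    have hξ' : A₁ * ξ * M₁ + ξ * M₂ = 0 := hξ
    have htr : (ξᵀ * (A₁ * ξ * M₁)).trace + (ξᵀ * (ξ * M₂)).trace = 0 := by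
      rw [← trace_add, ← Matrix.mul_add, hξ', Matrix.mul_zero, trace_zero]
    -- second term nonneg
    have h2 : 0 ≤ (ξᵀ * (ξ * M₂)).trace := by
      have : (ξᵀ * (ξ * M₂)).trace = ((ξᵀ)ᵀ * M₂ * ξᵀ).trace := by
        rw [transpose_transpose, ← Matrix.mul_assoc, trace_mul_comm (ξᵀ * ξ) M₂,
          ← Matrix.mul_assoc, trace_mul_comm (M₂ * ξᵀ) ξ, ← Matrix.mul_assoc]
      rw [this]
      exact trace_transpose_mul_mul_nonneg _ _ hM₂psd
    -- first term positive
    have h1 : 0 < (ξᵀ * (A₁ * ξ * M₁)).trace := by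
      have hxS : ξ * S ≠ 0 := by
        intro h
        apply hne
        calc ξ = ξ * (S * S⁻¹) := by rw [mul_nonsing_inv _ hSdet, Matrix.mul_one]
          _ = (ξ * S) * S⁻¹ := by rw [Matrix.mul_assoc]
          _ = 0 := by rw [h, Matrix.zero_mul]
      have key : (ξᵀ * (A₁ * ξ * M₁)).trace = ((ξ * S)ᵀ * A₁ * (ξ * S)).trace := by
        rw [transpose_mul, hSsymm]
        rw [← hSsq]
        rw [show ξᵀ * (A₁ * ξ * (S * S)) = (ξᵀ * (A₁ * ξ * S)) * S by
          simp only [Matrix.mul_assoc]]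
        rw [trace_mul_comm]
        simp only [Matrix.mul_assoc]
      rw [key]
      exact trace_transpose_mul_mul_pos _ _ hA₁pd hxS
    linarith
  -- surjectivity from injectivity in finite dimension
  have hsurj : Function.Surjective L := (LinearMap.injective_iff_surjective).mp hinj
  obtain ⟨ξ, hξ⟩ := hsurj Z
  refine ⟨ξ, hξ, fun ξ' hξ' => hinj ?_⟩
  show A₁ * ξ' * M₁ + ξ' * M₂ = A₁ * ξ * M₁ + ξ * M₂
  rw [hξ']
  exact hξ.symm
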